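/- arXiv:2402.01951 — 4 statements merged into one kernel-verified Lean document; each statement's English description precedes it below -/
import Mathlib

section
/- Under Assumption 1, the map (z, κ, λ) ↦ D(z, κ, λ, ℙ) is jointly continuous on ℝ × Λ∞ × Λ∞, where ℝ carries the Euclidean topology and Λ∞ the topology induced by the ℓ¹ norm. -/
open MeasureTheory ENNReal
section auxhidden
variable {Ω : Type*} [MeasurableSpace Ω]

lemma aux_sum_lp (κ : lp (fun _ : ℕ => ℝ) 1) : Summable fun i => |κ i| := by
  have := (lp.memℓp κ).summable (p := 1) (by norm_num)
  simpa using this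

lemma aux_norm_lp (κ : lp (fun _ : ℕ => ℝ) 1) : ‖κ‖ = ∑' i, |κ i| := by
  have := lp.norm_eq_tsum_rpow (p := 1) (by norm_num) κ
  simpa using this

end auxhidden

section auxhidden2
variable {Ω : Type*} [MeasurableSpace Ω]
variable {Ω : Type*} [MeasurableSpace Ω]

lemma aux_lint {ℙ : Measure Ω} (X : ℕ → Ω → ℝ) (hXmeas : ∀ i, Measurable (X i))
    (hXint : ∀ i, Integrable (X i) ℙ) {M : ℝ} (hM : ∀ i, ∫ ω, |X i ω| ∂ℙ ≤ M)
    (μ : ℕ → ℝ) (hμ : Summable fun i => |μ i|) :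
    ∑' i, ∫⁻ ω, (‖μ i * X i ω‖₊ : ℝ≥0∞) ∂ℙ ≤ ENNReal.ofReal (M * ∑' i, |μ i|) := by
  have h1 : ∀ i, ∫⁻ ω, (‖μ i * X i ω‖₊ : ℝ≥0∞) ∂ℙ ≤ ENNReal.ofReal (|μ i| * M) := by
    intro i
    have hint : Integrable (fun ω => μ i * X i ω) ℙ := (hXint i).const_mul (μ i)
    simp_rw [← enorm_eq_nnnorm]
    rw [← ofReal_integral_norm_eq_lintegral_enorm hint]
    apply ENNReal.ofReal_le_ofReal
    have : ∫ ω, ‖μ i * X i ω‖ ∂ℙ = |μ i| * ∫ ω, |X i ω| ∂ℙ := by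
      simp_rw [Real.norm_eq_abs, abs_mul, integral_const_mul]
    rw [this]
    have h0 : (0:ℝ) ≤ ∫ ω, |X 0 ω| ∂ℙ := integral_nonneg fun ω => abs_nonneg _
    exact mul_le_mul_of_nonneg_left (hM i) (abs_nonneg _)
  calc ∑' i, ∫⁻ ω, (‖μ i * X i ω‖₊ : ℝ≥0∞) ∂ℙ
      ≤ ∑' i, ENNReal.ofReal (|μ i| * M) := ENNReal.tsum_le_tsum h1
    _ = ENNReal.ofReal (∑' i, |μ i| * M) := by
        rw [← ENNReal.ofReal_tsum_of_nonneg]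
        · intro i
          have h0 : (0:ℝ) ≤ M := le_trans (integral_nonneg fun ω => abs_nonneg _) (hM 0)
          positivity
        · exact hμ.mul_right M
    _ = ENNReal.ofReal (M * ∑' i, |μ i|) := by rw [tsum_mul_right, mul_comm]

lemma aux_ae_summable {ℙ : Measure Ω} (X : ℕ → Ω → ℝ) (hXmeas : ∀ i, Measurable (X i))
    (hXint : ∀ i, Integrable (X i) ℙ) {M : ℝ} (hM : ∀ i, ∫ ω, |X i ω| ∂ℙ ≤ M)
    (μ : ℕ → ℝ) (hμ : Summable fun i => |μ i|) :
    ∀ᵐ ω ∂ℙ, Summable fun i => ‖μ i * X i ω‖ := by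
  have hmeas : ∀ i, Measurable fun ω => (‖μ i * X i ω‖₊ : ℝ≥0∞) :=
    fun i => (measurable_const.mul (hXmeas i)).nnnorm.coe_nnreal_ennreal
  have htop : ∫⁻ ω, ∑' i, (‖μ i * X i ω‖₊ : ℝ≥0∞) ∂ℙ ≠ ∞ := by
    rw [lintegral_tsum fun i => (hmeas i).aemeasurable]
    exact ((aux_lint X hXmeas hXint hM μ hμ).trans_lt ENNReal.ofReal_lt_top).ne
  have := ae_lt_top' (AEMeasurable.ennreal_tsum fun i => (hmeas i).aemeasurable) htop
  filter_upwards [this] with ω hω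
  have : Summable fun i => ‖μ i * X i ω‖₊ := by
    rw [← ENNReal.tsum_coe_ne_top_iff_summable]
    exact hω.ne
  simpa [← NNReal.summable_coe, coe_nnnorm] using this

lemma aux_int {ℙ : Measure Ω} [IsProbabilityMeasure ℙ] (X : ℕ → Ω → ℝ)
    (hXmeas : ∀ i, Measurable (X i))
    (hXint : ∀ i, Integrable (X i) ℙ) {M : ℝ} (hM : ∀ i, ∫ ω, |X i ω| ∂ℙ ≤ M)
    (μ : ℕ → ℝ) (hμ : Summable fun i => |μ i|) :
    Integrable (fun ω => ∑' i, μ i * X i ω) ℙ ∧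
      ∫ ω, |∑' i, μ i * X i ω| ∂ℙ ≤ M * ∑' i, |μ i| := by
  have hae := aux_ae_summable X hXmeas hXint hM μ hμ
  have hmeas : AEStronglyMeasurable (fun ω => ∑' i, μ i * X i ω) ℙ := by
    refine (aemeasurable_of_tendsto_metrizable_ae Filter.atTop
      (f := fun n ω => ∑ i ∈ Finset.range n, μ i * X i ω)
      (fun n => (Finset.measurable_sum _ fun i _ =>
        (measurable_const.mul (hXmeas i))).aemeasurable) ?_).aestronglyMeasurable
    filter_upwards [hae] with ω hω
    exact (hω.of_norm.hasSum).tendsto_sum_nat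
  have hptwise : ∀ᵐ ω ∂ℙ,
      (‖∑' i, μ i * X i ω‖₊ : ℝ≥0∞) ≤ ∑' i, (‖μ i * X i ω‖₊ : ℝ≥0∞) := by
    filter_upwards [hae] with ω hω
    have hb : ‖∑' i, μ i * X i ω‖ ≤ ∑' i, ‖μ i * X i ω‖ := norm_tsum_le_tsum_norm hω
    calc (‖∑' i, μ i * X i ω‖₊ : ℝ≥0∞) = ENNReal.ofReal ‖∑' i, μ i * X i ω‖ :=
          (ofReal_norm _).symm
      _ ≤ ENNReal.ofReal (∑' i, ‖μ i * X i ω‖) := ENNReal.ofReal_le_ofReal hb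
      _ = ∑' i, ENNReal.ofReal ‖μ i * X i ω‖ :=
          ENNReal.ofReal_tsum_of_nonneg (fun i => norm_nonneg _) hω
      _ = ∑' i, (‖μ i * X i ω‖₊ : ℝ≥0∞) := by
          simp_rw [ofReal_norm, enorm_eq_nnnorm]
  have hbound : ∫⁻ ω, (‖∑' i, μ i * X i ω‖₊ : ℝ≥0∞) ∂ℙ ≤ ENNReal.ofReal (M * ∑' i, |μ i|) := by
    calc ∫⁻ ω, (‖∑' i, μ i * X i ω‖₊ : ℝ≥0∞) ∂ℙ
        ≤ ∫⁻ ω, ∑' i, (‖μ i * X i ω‖₊ : ℝ≥0∞) ∂ℙ := lintegral_mono_ae hptwise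
      _ = ∑' i, ∫⁻ ω, (‖μ i * X i ω‖₊ : ℝ≥0∞) ∂ℙ := lintegral_tsum fun i =>
          ((measurable_const.mul (hXmeas i)).nnnorm.coe_nnreal_ennreal).aemeasurable
      _ ≤ ENNReal.ofReal (M * ∑' i, |μ i|) := aux_lint X hXmeas hXint hM μ hμ
  have hint : Integrable (fun ω => ∑' i, μ i * X i ω) ℙ :=
    ⟨hmeas, hbound.trans_lt ENNReal.ofReal_lt_top⟩
  refine ⟨hint, ?_⟩
  have : ∫ ω, |∑' i, μ i * X i ω| ∂ℙ
      = (∫⁻ ω, (‖∑' i, μ i * X i ω‖₊ : ℝ≥0∞) ∂ℙ).toReal := by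
    simp_rw [← Real.norm_eq_abs]
    exact integral_norm_eq_lintegral_enorm hmeas
  rw [this]
  have hMN : (0:ℝ) ≤ M * ∑' i, |μ i| := by
    have h0 : (0:ℝ) ≤ M := le_trans (integral_nonneg fun ω => abs_nonneg _) (hM 0)
    have h1 : (0:ℝ) ≤ ∑' i, |μ i| := tsum_nonneg fun i => abs_nonneg _
    positivity
  calc (∫⁻ ω, (‖∑' i, μ i * X i ω‖₊ : ℝ≥0∞) ∂ℙ).toReal
      ≤ (ENNReal.ofReal (M * ∑' i, |μ i|)).toReal :=
        ENNReal.toReal_mono ENNReal.ofReal_ne_top hbound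
    _ = M * ∑' i, |μ i| := ENNReal.toReal_ofReal hMN

lemma aux_phi_int {ℙ : Measure Ω} [IsProbabilityMeasure ℙ] (X : ℕ → Ω → ℝ)
    (hXmeas : ∀ i, Measurable (X i))
    (hXint : ∀ i, Integrable (X i) ℙ) {M : ℝ} (hM : ∀ i, ∫ ω, |X i ω| ∂ℙ ≤ M)
    (z : ℝ) (κ : lp (fun _ : ℕ => ℝ) 1) :
    Integrable (fun ω => max (z - ∑' i, κ i * X i ω) 0) ℙ := by
  have hS := (aux_int X hXmeas hXint hM (fun i => κ i) (aux_sum_lp κ)).1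
  refine Integrable.mono ((integrable_const |z|).add hS.abs)
    ((aemeasurable_const.sub hS.1.aemeasurable).max aemeasurable_const).aestronglyMeasurable ?_
  filter_upwards with ω
  have h1 : max (z - ∑' i, κ i * X i ω) 0 ≤ |z - ∑' i, κ i * X i ω| :=
    max_le (le_abs_self _) (abs_nonneg _)
  have h2 : |z - ∑' i, κ i * X i ω| ≤ |z| + |∑' i, κ i * X i ω| := abs_sub _ _
  have h3 : (0:ℝ) ≤ max (z - ∑' i, κ i * X i ω) 0 := le_max_right _ _
  simp only [Real.norm_eq_abs, abs_of_nonneg h3]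
  exact (h1.trans h2).trans (le_abs_self _)

lemma aux_key {ℙ : Measure Ω} [IsProbabilityMeasure ℙ] (X : ℕ → Ω → ℝ)
    (hXmeas : ∀ i, Measurable (X i))
    (hXint : ∀ i, Integrable (X i) ℙ) {M : ℝ} (hM : ∀ i, ∫ ω, |X i ω| ∂ℙ ≤ M)
    (p q : ℝ × lp (fun _ : ℕ => ℝ) 1) :
    |(∫ ω, max (p.1 - ∑' i, p.2 i * X i ω) 0 ∂ℙ) -
        ∫ ω, max (q.1 - ∑' i, q.2 i * X i ω) 0 ∂ℙ|
      ≤ |p.1 - q.1| + M * ‖p.2 - q.2‖ := by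
  obtain ⟨z, κ⟩ := p
  obtain ⟨z', l⟩ := q
  simp only
  set δ : lp (fun _ : ℕ => ℝ) 1 := κ - l with hδ
  have hδcoe : ∀ i, δ i = κ i - l i := by
    intro i
    simp [hδ]
  have hSδ := (aux_int X hXmeas hXint hM (fun i => δ i) (aux_sum_lp δ)).1
  have hSδbd := (aux_int X hXmeas hXint hM (fun i => δ i) (aux_sum_lp δ)).2
  have hφ := aux_phi_int X hXmeas hXint hM z κ
  have hψ := aux_phi_int X hXmeas hXint hM z' l
  rw [← integral_sub hφ hψ]
  have hbd : |∫ ω, (max (z - ∑' i, κ i * X i ω) 0 - max (z' - ∑' i, l i * X i ω) 0) ∂ℙ|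
      ≤ ∫ ω, (|z - z'| + |∑' i, δ i * X i ω|) ∂ℙ := by
    have hni := norm_integral_le_integral_norm (μ := ℙ)
      (f := fun ω => max (z - ∑' i, κ i * X i ω) 0 - max (z' - ∑' i, l i * X i ω) 0)
    simp only [Real.norm_eq_abs] at hni
    refine hni.trans ?_
    refine integral_mono_ae (hφ.sub hψ).abs
      ((integrable_const |z - z'|).add hSδ.abs) ?_
    filter_upwards [aux_ae_summable X hXmeas hXint hM (fun i => κ i) (aux_sum_lp κ),
      aux_ae_summable X hXmeas hXint hM (fun i => l i) (aux_sum_lp l)] with ω h1 h2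
    have hsub : ∑' i, δ i * X i ω = (∑' i, κ i * X i ω) - ∑' i, l i * X i ω := by
      have he : (fun i => δ i * X i ω) = fun i => κ i * X i ω - l i * X i ω := by
        funext i; rw [hδcoe i, sub_mul]
      rw [he, Summable.tsum_sub h1.of_norm h2.of_norm]
    have habs : |max (z - ∑' i, κ i * X i ω) 0 - max (z' - ∑' i, l i * X i ω) 0|
        ≤ |(z - ∑' i, κ i * X i ω) - (z' - ∑' i, l i * X i ω)| :=
      abs_max_sub_max_le_abs _ _ _
    calc |max (z - ∑' i, κ i * X i ω) 0 - max (z' - ∑' i, l i * X i ω) 0|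
        ≤ |(z - z') - ((∑' i, κ i * X i ω) - ∑' i, l i * X i ω)| := by
          convert habs using 2; ring
      _ ≤ |z - z'| + |(∑' i, κ i * X i ω) - ∑' i, l i * X i ω| := abs_sub _ _
      _ = |z - z'| + |∑' i, δ i * X i ω| := by rw [hsub]
  refine hbd.trans ?_
  rw [integral_add (integrable_const _) hSδ.abs, integral_const]
  simp only [measure_univ, ENNReal.toReal_one, one_smul, smul_eq_mul, probReal_univ, one_mul]
  have : ∫ ω, |∑' i, δ i * X i ω| ∂ℙ ≤ M * ‖δ‖ := by
    rw [aux_norm_lp δ]; exact hSδbd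
  linarith

end auxhidden2

open MeasureTheory

/-- Under Assumption 1, the lower partial moment differential
`(z, κ, λ) ↦ D(z, κ, λ, ℙ)` is jointly continuous on `ℝ × Λ∞ × Λ∞`, where the
ℕ-simplex `Λ∞` carries the topology induced by the ℓ¹ norm. -/
theorem sparse_ssd_stmt2
    {Ω : Type*} [MeasurableSpace Ω] (ℙ : Measure Ω) [IsProbabilityMeasure ℙ]
    (X : ℕ → Ω → ℝ) (hXmeas : ∀ i, Measurable (X i))
    (hXint : ∀ i, Integrable (X i) ℙ)
    (hbdd : BddAbove (Set.range fun i => ∫ ω, |X i ω| ∂ℙ)) :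
    ContinuousOn
      (fun t : ℝ × lp (fun _ : ℕ => ℝ) 1 × lp (fun _ : ℕ => ℝ) 1 =>
        (∫ ω, max (t.1 - ∑' i, t.2.1 i * X i ω) 0 ∂ℙ) -
          ∫ ω, max (t.1 - ∑' i, t.2.2 i * X i ω) 0 ∂ℙ)
      (Set.univ ×ˢ
        ({f : lp (fun _ : ℕ => ℝ) 1 | (∀ i, 0 ≤ f i) ∧ ∑' i, f i = 1} ×ˢ
          {f : lp (fun _ : ℕ => ℝ) 1 | (∀ i, 0 ≤ f i) ∧ ∑' i, f i = 1})) := by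
  set M : ℝ := sSup (Set.range fun i => ∫ ω, |X i ω| ∂ℙ) with hMdef
  have hM : ∀ i, ∫ ω, |X i ω| ∂ℙ ≤ M := fun i => le_csSup hbdd ⟨i, rfl⟩
  have hM0 : 0 ≤ M := le_trans (integral_nonneg fun ω => abs_nonneg _) (hM 0)
  have hG : Continuous (fun p : ℝ × lp (fun _ : ℕ => ℝ) 1 =>
      ∫ ω, max (p.1 - ∑' i, p.2 i * X i ω) 0 ∂ℙ) := by
    refine (LipschitzWith.of_dist_le_mul (K := ⟨1 + M, by positivity⟩) ?_).continuous
    intro p q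
    rw [Real.dist_eq, Prod.dist_eq, Real.dist_eq, dist_eq_norm]
    refine (aux_key X hXmeas hXint hM p q).trans ?_
    have h1 : |p.1 - q.1| ≤ max |p.1 - q.1| ‖p.2 - q.2‖ := le_max_left _ _
    have h2 : ‖p.2 - q.2‖ ≤ max |p.1 - q.1| ‖p.2 - q.2‖ := le_max_right _ _
    change _ ≤ (1 + M) * _
    nlinarith [abs_nonneg (p.1 - q.1), norm_nonneg (p.2 - q.2)]
  exact ((hG.comp (continuous_fst.prodMk (continuous_fst.comp continuous_snd))).sub
    (hG.comp (continuous_fst.prodMk (continuous_snd.comp continuous_snd)))).continuousOn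
end

section
/- (Lemma 1.) Under the stated assumptions, K second-order stochastically dominance spans Λ, i.e. K ⪰_SSD Λ, if and only if sup_{λ ∈ Λ} inf_{κ ∈ K} sup_{z ∈ Z} D(z, κ, λ, ℙ) ≤ 0. -/
open MeasureTheory

/-- The lower partial moment differential (LPMD) for portfolios on `p` base assets:
`D(z, κ, λ, ℙ) = E[(z − κᵀX)₊] − E[(z − λᵀX)₊]`. -/
noncomputable def LPMD {Ω : Type*} [MeasurableSpace Ω] (ℙ : Measure Ω) {p : ℕ}
    (X : Ω → Fin p → ℝ) (z : ℝ) (k l : Fin p → ℝ) : ℝ :=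
  (∫ ω, max (z - ∑ i, k i * X ω i) 0 ∂ℙ) - ∫ ω, max (z - ∑ i, l i * X ω i) 0 ∂ℙ

/-- The (topological) support of a Borel measure on `ℝ`. -/
def measSupport (μ : Measure ℝ) : Set ℝ := {x : ℝ | ∀ U ∈ nhds x, 0 < μ U}

section Aux

variable {Ω : Type*} [MeasurableSpace Ω] {ℙ : Measure Ω} [IsProbabilityMeasure ℙ]
  {p : ℕ} {X : Ω → Fin p → ℝ}

/-- Expected positive part `φ(z, k) = E[(z − kᵀX)₊]`. -/
noncomputable def phiAux (ℙ : Measure Ω) (X : Ω → Fin p → ℝ) (z : ℝ) (k : Fin p → ℝ) : ℝ :=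
  ∫ ω, max (z - ∑ i, k i * X ω i) 0 ∂ℙ

lemma LPMD_eq (z : ℝ) (k l : Fin p → ℝ) :
    LPMD ℙ X z k l = phiAux ℙ X z k - phiAux ℙ X z l := rfl

/-- Total absolute first moments `C = Σ_i E|X_i|`. -/
noncomputable def CAux (ℙ : Measure Ω) (X : Ω → Fin p → ℝ) : ℝ := ∑ i, ∫ ω, |X ω i| ∂ℙ

lemma CAux_nonneg : 0 ≤ CAux ℙ X :=
  Finset.sum_nonneg fun i _ => integral_nonneg fun ω => abs_nonneg _

lemma intY (hXint : ∀ i, Integrable (fun ω => X ω i) ℙ) (k : Fin p → ℝ) :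
    Integrable (fun ω => ∑ i, k i * X ω i) ℙ := by
  have := integrable_finset_sum (μ := ℙ) (f := fun i ω => k i * X ω i) Finset.univ
    (fun i _ => (hXint i).const_mul (k i))
  exact this

lemma intAbs (hXint : ∀ i, Integrable (fun ω => X ω i) ℙ) :
    Integrable (fun ω => ∑ i, |X ω i|) ℙ := by
  have := integrable_finset_sum (μ := ℙ) (f := fun i ω => |X ω i|) Finset.univ
    (fun i _ => (hXint i).abs)
  exact this

lemma intPos (hXint : ∀ i, Integrable (fun ω => X ω i) ℙ) (z : ℝ) (k : Fin p → ℝ) :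
    Integrable (fun ω => max (z - ∑ i, k i * X ω i) 0) ℙ :=
  ((integrable_const z).sub (intY hXint k)).pos_part

lemma phiAux_nonneg (z : ℝ) (k : Fin p → ℝ) : 0 ≤ phiAux ℙ X z k :=
  integral_nonneg fun ω => le_max_right _ _

lemma absY_le {k : Fin p → ℝ} (hk : k ∈ stdSimplex ℝ (Fin p)) (ω : Ω) :
    |∑ i, k i * X ω i| ≤ ∑ i, |X ω i| := by
  calc |∑ i, k i * X ω i| ≤ ∑ i, |k i * X ω i| := Finset.abs_sum_le_sum_abs _ _
    _ ≤ ∑ i, |X ω i| := by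
      refine Finset.sum_le_sum fun i _ => ?_
      rw [abs_mul]
      have h0 : 0 ≤ k i := hk.1 i
      have h1 : k i ≤ 1 := by
        have := Finset.single_le_sum (f := k) (fun j _ => hk.1 j) (Finset.mem_univ i)
        rw [hk.2] at this; exact this
      have := abs_nonneg (X ω i)
      nlinarith [abs_of_nonneg h0]

lemma phiAux_le (hXint : ∀ i, Integrable (fun ω => X ω i) ℙ) (z : ℝ) {k : Fin p → ℝ}
    (hk : k ∈ stdSimplex ℝ (Fin p)) : phiAux ℙ X z k ≤ max z 0 + CAux ℙ X := by
  have hint2 : Integrable (fun ω => max z 0 + ∑ i, |X ω i|) ℙ :=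
    (integrable_const _).add (intAbs hXint)
  have h1 : ∀ ω, max (z - ∑ i, k i * X ω i) 0 ≤ max z 0 + ∑ i, |X ω i| := by
    intro ω
    have hY := absY_le (X := X) hk ω
    have habs := abs_le.mp hY
    have hz : z ≤ max z 0 := le_max_left _ _
    have hnn : (0:ℝ) ≤ ∑ i, |X ω i| :=
      Finset.sum_nonneg fun i _ => abs_nonneg _
    have hnn2 : (0:ℝ) ≤ max z 0 := le_max_right _ _
    apply max_le <;> linarith
  calc phiAux ℙ X z k ≤ ∫ ω, (max z 0 + ∑ i, |X ω i|) ∂ℙ :=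
        integral_mono (intPos hXint z k) hint2 h1
    _ = max z 0 + CAux ℙ X := by
        rw [integral_add (integrable_const _) (intAbs hXint), integral_const,
          integral_finset_sum _ (fun i _ => (hXint i).abs)]
        simp [CAux]

lemma phiAux_ge (hXint : ∀ i, Integrable (fun ω => X ω i) ℙ) (z : ℝ) {l : Fin p → ℝ}
    (hl : l ∈ stdSimplex ℝ (Fin p)) : z - CAux ℙ X ≤ phiAux ℙ X z l := by
  have h1 : ∫ ω, (z - ∑ i, l i * X ω i) ∂ℙ ≤ phiAux ℙ X z l :=
    integral_mono ((integrable_const z).sub (intY hXint l)) (intPos hXint z l)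
      fun ω => le_max_left _ _
  have h2 : ∫ ω, (z - ∑ i, l i * X ω i) ∂ℙ = z - ∑ i, l i * ∫ ω, X ω i ∂ℙ := by
    rw [integral_sub (integrable_const z) (intY hXint l), integral_const,
      integral_finset_sum _ (fun i _ => (hXint i).const_mul (l i))]
    simp [integral_const_mul]
  have h3 : ∑ i, l i * ∫ ω, X ω i ∂ℙ ≤ CAux ℙ X := by
    refine Finset.sum_le_sum fun i _ => ?_
    have h0 : 0 ≤ l i := hl.1 i
    have h1' : l i ≤ 1 := by
      have := Finset.single_le_sum (f := l) (fun j _ => hl.1 j) (Finset.mem_univ i)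
      rw [hl.2] at this; exact this
    have habs : ∫ ω, X ω i ∂ℙ ≤ ∫ ω, |X ω i| ∂ℙ :=
      integral_mono (hXint i) (hXint i).abs fun ω => le_abs_self _
    have hnn : (0:ℝ) ≤ ∫ ω, |X ω i| ∂ℙ := integral_nonneg fun ω => abs_nonneg _
    nlinarith [neg_abs_le (∫ ω, X ω i ∂ℙ), abs_nonneg (∫ ω, X ω i ∂ℙ),
      le_abs_self (∫ ω, X ω i ∂ℙ)]
  linarith

/-- Uniform upper bound on the LPMD over the simplex. -/
lemma LPMD_le (hXint : ∀ i, Integrable (fun ω => X ω i) ℙ) (z : ℝ) {k l : Fin p → ℝ}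
    (hk : k ∈ stdSimplex ℝ (Fin p)) (hl : l ∈ stdSimplex ℝ (Fin p)) :
    LPMD ℙ X z k l ≤ 2 * CAux ℙ X := by
  rw [LPMD_eq]
  have h1 := phiAux_le hXint z hk
  have h2 := phiAux_ge hXint z hl
  have h3 := phiAux_nonneg (ℙ := ℙ) (X := X) z l
  have hC := CAux_nonneg (ℙ := ℙ) (X := X)
  rcases le_total z 0 with hz | hz
  · rw [max_eq_right hz] at h1; linarith
  · rw [max_eq_left hz] at h1; linarith

/-- Lipschitz estimate for `φ` in the portfolio variable. -/
lemma phiAux_lip (hXint : ∀ i, Integrable (fun ω => X ω i) ℙ) (z : ℝ) (k k' : Fin p → ℝ) :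
    |phiAux ℙ X z k - phiAux ℙ X z k'| ≤ dist k k' * CAux ℙ X := by
  have hsub : phiAux ℙ X z k - phiAux ℙ X z k' =
      ∫ ω, (max (z - ∑ i, k i * X ω i) 0 - max (z - ∑ i, k' i * X ω i) 0) ∂ℙ := by
    rw [integral_sub (intPos hXint z k) (intPos hXint z k')]; rfl
  rw [hsub]
  have hptw : ∀ ω, |max (z - ∑ i, k i * X ω i) 0 - max (z - ∑ i, k' i * X ω i) 0| ≤
      dist k k' * ∑ i, |X ω i| := by
    intro ω
    calc |max (z - ∑ i, k i * X ω i) 0 - max (z - ∑ i, k' i * X ω i) 0|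
        ≤ |(z - ∑ i, k i * X ω i) - (z - ∑ i, k' i * X ω i)| :=
          abs_max_sub_max_le_abs _ _ _
      _ = |∑ i, (k' i - k i) * X ω i| := by
          congr 1
          simp only [sub_mul]
          rw [Finset.sum_sub_distrib]
          ring
      _ ≤ ∑ i, |(k' i - k i) * X ω i| := Finset.abs_sum_le_sum_abs _ _
      _ ≤ ∑ i, dist k k' * |X ω i| := by
          refine Finset.sum_le_sum fun i _ => ?_
          rw [abs_mul]
          refine mul_le_mul_of_nonneg_right ?_ (abs_nonneg _)
          have := dist_le_pi_dist k' k i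
          rw [Real.dist_eq] at this
          rw [dist_comm k k']
          exact this
      _ = dist k k' * ∑ i, |X ω i| := by rw [Finset.mul_sum]
  calc |∫ ω, (max (z - ∑ i, k i * X ω i) 0 - max (z - ∑ i, k' i * X ω i) 0) ∂ℙ|
      ≤ ∫ ω, |max (z - ∑ i, k i * X ω i) 0 - max (z - ∑ i, k' i * X ω i) 0| ∂ℙ := by
        simpa [Real.norm_eq_abs] using
          norm_integral_le_integral_norm
            (fun ω => max (z - ∑ i, k i * X ω i) 0 - max (z - ∑ i, k' i * X ω i) 0) (μ := ℙ)
    _ ≤ ∫ ω, dist k k' * ∑ i, |X ω i| ∂ℙ :=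
        integral_mono ((intPos hXint z k).sub (intPos hXint z k')).abs
          ((intAbs hXint).const_mul _) hptw
    _ = dist k k' * CAux ℙ X := by
        rw [integral_const_mul, integral_finset_sum _ (fun i _ => (hXint i).abs)]; rfl

end Aux

/-- **Lemma 1.** `K ⪰_SSD Λ` iff
`sup_{λ ∈ Λ} inf_{κ ∈ K} sup_{z ∈ Z} D(z, κ, λ, ℙ) ≤ 0`. -/
theorem sparse_ssd_stmt4
    {Ω : Type*} [MeasurableSpace Ω] (ℙ : Measure Ω) [IsProbabilityMeasure ℙ]
    {p : ℕ} (hp : 0 < p)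
    (X : Ω → Fin p → ℝ) (hXmeas : Measurable X)
    (hXint : ∀ i, Integrable (fun ω => X ω i) ℙ)
    (Z : Set ℝ)
    (hZ : Z = closure (convexHull ℝ (⋃ i, measSupport (Measure.map (fun ω => X ω i) ℙ))))
    (hZne : Z.Nonempty) (hZbdd : BddBelow Z)
    (K : Set (Fin p → ℝ)) (hKne : K.Nonempty) (hKcl : IsClosed K)
    (hKsub : K ⊆ stdSimplex ℝ (Fin p)) :
    (∀ l ∈ stdSimplex ℝ (Fin p), ∃ k ∈ K, ∀ z ∈ Z, LPMD ℙ X z k l ≤ 0) ↔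
      (⨆ l : stdSimplex ℝ (Fin p), ⨅ k : K, ⨆ z : Z, LPMD ℙ X (↑z) (↑k) (↑l)) ≤ 0 := by
  classical
  haveI : Nonempty K := hKne.to_subtype
  haveI : Nonempty Z := hZne.to_subtype
  haveI : Nonempty (stdSimplex ℝ (Fin p)) := by
    refine ⟨⟨fun _ => (p : ℝ)⁻¹, fun i => by positivity, ?_⟩⟩
    simp [Finset.sum_const, Finset.card_univ]
    field_simp
  set C : ℝ := CAux ℙ X with hC
  have hC0 : 0 ≤ C := CAux_nonneg
  obtain ⟨z₀, hz₀⟩ := hZne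
  -- boundedness above of the inner family over z, for k, l in the simplex
  have hbddZ : ∀ {k l : Fin p → ℝ}, k ∈ stdSimplex ℝ (Fin p) → l ∈ stdSimplex ℝ (Fin p) →
      BddAbove (Set.range fun z : Z => LPMD ℙ X (↑z) k l) := by
    intro k l hk hl
    exact ⟨2 * C, by rintro x ⟨z, rfl⟩; exact LPMD_le hXint _ hk hl⟩
  -- boundedness below of the family over k, for fixed l in the simplex
  have hbddK : ∀ {l : Fin p → ℝ}, l ∈ stdSimplex ℝ (Fin p) →
      BddBelow (Set.range fun k : K => ⨆ z : Z, LPMD ℙ X (↑z) (↑k) l) := by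
    intro l hl
    refine ⟨-(phiAux ℙ X z₀ l), ?_⟩
    rintro x ⟨k, rfl⟩
    have h1 : LPMD ℙ X z₀ (↑k) l ≤ ⨆ z : Z, LPMD ℙ X (↑z) (↑k) l :=
      le_ciSup (hbddZ (hKsub k.2) hl) (⟨z₀, hz₀⟩ : Z)
    have h2 : -(phiAux ℙ X z₀ l) ≤ LPMD ℙ X z₀ (↑k) l := by
      rw [LPMD_eq]
      have := phiAux_nonneg (ℙ := ℙ) (X := X) z₀ (↑k)
      linarith
    exact le_trans h2 h1
  constructor
  · -- forward
    intro h
    refine ciSup_le fun l => ?_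
    obtain ⟨k₀, hk₀K, hk₀⟩ := h (↑l) l.2
    have hG : (⨆ z : Z, LPMD ℙ X (↑z) k₀ (↑l)) ≤ 0 :=
      ciSup_le fun z => hk₀ (↑z) z.2
    exact le_trans (ciInf_le (hbddK l.2) (⟨k₀, hk₀K⟩ : K)) hG
  · -- backward
    intro h l hl
    obtain ⟨k₁, hk₁⟩ := hKne
    -- the outer family over l is bounded above
    have hbddL : BddAbove (Set.range fun l : stdSimplex ℝ (Fin p) =>
        ⨅ k : K, ⨆ z : Z, LPMD ℙ X (↑z) (↑k) (↑l)) := by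
      refine ⟨2 * C, ?_⟩
      rintro x ⟨l', rfl⟩
      refine le_trans (ciInf_le (hbddK l'.2) (⟨k₁, hk₁⟩ : K)) ?_
      exact ciSup_le fun z => LPMD_le hXint _ (hKsub hk₁) l'.2
    have hFl : (⨅ k : K, ⨆ z : Z, LPMD ℙ X (↑z) (↑k) l) ≤ 0 :=
      le_trans (le_ciSup hbddL (⟨l, hl⟩ : stdSimplex ℝ (Fin p))) h
    -- the function f(k) = sup_z D(z,k,l) is Lipschitz on K, hence continuous
    set f : (Fin p → ℝ) → ℝ := fun k => ⨆ z : Z, LPMD ℙ X (↑z) k l with hf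
    have hlip : ∀ k ∈ K, ∀ k' ∈ K, f k ≤ f k' + dist k k' * C := by
      intro k hk k' hk'
      refine ciSup_le fun z => ?_
      have h1 : LPMD ℙ X (↑z) k l ≤ LPMD ℙ X (↑z) k' l + dist k k' * C := by
        rw [LPMD_eq, LPMD_eq]
        have := phiAux_lip (ℙ := ℙ) (X := X) hXint (↑z) k k'
        have := abs_le.mp this
        linarith [this.2]
      have h2 : LPMD ℙ X (↑z) k' l ≤ f k' :=
        le_ciSup (hbddZ (hKsub hk') hl) z
      linarith
    have hcont : ContinuousOn f K := by
      have : LipschitzOnWith (Real.toNNReal C) f K := by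
        refine LipschitzOnWith.of_dist_le_mul fun k hk k' hk' => ?_
        rw [Real.dist_eq]
        have h1 := hlip k hk k' hk'
        have h2 := hlip k' hk' k hk
        rw [dist_comm k' k] at h2
        have hCle : dist k k' * C ≤ (Real.toNNReal C : ℝ) * dist k k' := by
          rw [Real.coe_toNNReal C hC0, mul_comm]
        rw [abs_le]
        constructor <;> nlinarith
      exact this.continuousOn
    have hKcomp : IsCompact K :=
      IsCompact.of_isClosed_subset (isCompact_stdSimplex _ _) hKcl hKsub
    obtain ⟨k₀, hk₀K, hk₀min⟩ := hKcomp.exists_isMinOn ⟨k₁, hk₁⟩ hcont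
    refine ⟨k₀, hk₀K, fun z hz => ?_⟩
    have h1 : f k₀ ≤ ⨅ k : K, f (↑k) := le_ciInf fun k => hk₀min k.2
    have h2 : LPMD ℙ X z k₀ l ≤ f k₀ :=
      le_ciSup (hbddZ (hKsub hk₀K) hl) (⟨z, hz⟩ : Z)
    exact le_trans h2 (le_trans h1 hFl)
end

section
/- (Lemma 2, finite-dimensional part.) Under the stated assumptions, for fixed p and q with q < p, there exists a nonempty closed K ⊆ Λ with csupp(K) ≤ q such that K ⪰_SSD Λ if and only if inf_{K ∈ L_{p,q}} sup_{λ ∈ Λ} inf_{κ ∈ K} sup_{z ∈ Z} D(z, κ, λ, ℙ) ≤ 0. -/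
open MeasureTheory

/-- `csupp K`: the number of coordinates used by some portfolio in `K`. -/
noncomputable def csupp {p : ℕ} (K : Set (Fin p → ℝ)) : ℕ :=
  Set.ncard {i : Fin p | ∃ k ∈ K, k i ≠ 0}

/-- `L_{p,q}`: the collection of nonempty closed subsets of the simplex with
support of size at most `q`. -/
def sparseSets (p q : ℕ) : Set (Set (Fin p → ℝ)) :=
  {K | K ⊆ stdSimplex ℝ (Fin p) ∧ K.Nonempty ∧ IsClosed K ∧ csupp K ≤ q}

lemma real_iInf_le_zero {ι : Sort*} [Nonempty ι] (f : ι → ℝ) (i : ι) (h : f i ≤ 0) :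
    (⨅ j, f j) ≤ 0 := by
  by_cases hb : BddBelow (Set.range f)
  · exact (ciInf_le hb i).trans h
  · rw [Real.iInf_of_not_bddBelow hb]

section Aux

variable {Ω : Type*} [MeasurableSpace Ω] (ℙ : Measure Ω) [IsProbabilityMeasure ℙ]
  {p : ℕ} (X : Ω → Fin p → ℝ)

lemma integrable_dot (hXint : ∀ i, Integrable (fun ω => X ω i) ℙ) (κ : Fin p → ℝ) :
    Integrable (fun ω => ∑ i, κ i * X ω i) ℙ := by
  apply integrable_finset_sum
  intro i _
  exact (hXint i).const_mul _

lemma integrable_part (hXint : ∀ i, Integrable (fun ω => X ω i) ℙ) (κ : Fin p → ℝ) (z : ℝ) :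
    Integrable (fun ω => max (z - ∑ i, κ i * X ω i) 0) ℙ :=
  ((integrable_const z).sub (integrable_dot ℙ X hXint κ)).pos_part

lemma F_nonneg (κ : Fin p → ℝ) (z : ℝ) :
    0 ≤ ∫ ω, max (z - ∑ i, κ i * X ω i) 0 ∂ℙ :=
  integral_nonneg fun ω => le_max_right _ _

lemma F_diff_abs_le (hXint : ∀ i, Integrable (fun ω => X ω i) ℙ) (κ κ' : Fin p → ℝ) (z : ℝ) :
    |(∫ ω, max (z - ∑ i, κ i * X ω i) 0 ∂ℙ) - ∫ ω, max (z - ∑ i, κ' i * X ω i) 0 ∂ℙ|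
      ≤ ∑ i, |κ i - κ' i| * ∫ ω, |X ω i| ∂ℙ := by
  rw [← integral_sub (integrable_part ℙ X hXint κ z) (integrable_part ℙ X hXint κ' z)]
  calc |∫ ω, (max (z - ∑ i, κ i * X ω i) 0 - max (z - ∑ i, κ' i * X ω i) 0) ∂ℙ|
      ≤ ∫ ω, |max (z - ∑ i, κ i * X ω i) 0 - max (z - ∑ i, κ' i * X ω i) 0| ∂ℙ :=
        by simpa [Real.norm_eq_abs] using
          norm_integral_le_integral_norm (μ := ℙ)
            (f := fun ω => max (z - ∑ i, κ i * X ω i) 0 - max (z - ∑ i, κ' i * X ω i) 0)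
    _ ≤ ∫ ω, ∑ i, |κ i - κ' i| * |X ω i| ∂ℙ := by
        apply integral_mono
          ((integrable_part ℙ X hXint κ z).sub (integrable_part ℙ X hXint κ' z)).abs
          (integrable_finset_sum _ fun i _ => ((hXint i).abs.const_mul _))
        intro ω
        calc |max (z - ∑ i, κ i * X ω i) 0 - max (z - ∑ i, κ' i * X ω i) 0|
            ≤ |(z - ∑ i, κ i * X ω i) - (z - ∑ i, κ' i * X ω i)| :=
              abs_max_sub_max_le_abs _ _ _
          _ = |∑ i, (κ i - κ' i) * X ω i| := by
              rw [abs_sub_comm]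
              congr 1
              simp only [sub_mul, Finset.sum_sub_distrib]
              ring
          _ ≤ ∑ i, |(κ i - κ' i) * X ω i| := Finset.abs_sum_le_sum_abs _ _
          _ = ∑ i, |κ i - κ' i| * |X ω i| := by simp [abs_mul]
    _ = ∑ i, |κ i - κ' i| * ∫ ω, |X ω i| ∂ℙ := by
        rw [integral_finset_sum _ fun i _ => ((hXint i).abs.const_mul _)]
        simp [integral_const_mul]

lemma entry_le_one {p : ℕ} {x : Fin p → ℝ} (hx : x ∈ stdSimplex ℝ (Fin p)) (i : Fin p) :
    x i ≤ 1 := by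
  rcases hx with ⟨h0, h1⟩
  calc x i ≤ ∑ j, x j := Finset.single_le_sum (fun j _ => h0 j) (Finset.mem_univ i)
    _ = 1 := h1

variable (hXint : ∀ i, Integrable (fun ω => X ω i) ℙ)
include hXint

lemma lpmd_le_bound (κ l : Fin p → ℝ) (z : ℝ) :
    LPMD ℙ X z κ l ≤ ∑ i, |κ i - l i| * ∫ ω, |X ω i| ∂ℙ :=
  (le_abs_self _).trans (F_diff_abs_le ℙ X hXint κ l z)

lemma lpmd_diff_le (κ κ' l : Fin p → ℝ) (z : ℝ) :
    LPMD ℙ X z κ l ≤ LPMD ℙ X z κ' l + ∑ i, |κ i - κ' i| * ∫ ω, |X ω i| ∂ℙ := by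
  have h := (abs_le.mp (F_diff_abs_le ℙ X hXint κ κ' z)).2
  unfold LPMD at *
  linarith

lemma bddAbove_lpmd (Z : Set ℝ) (κ l : Fin p → ℝ) :
    BddAbove (Set.range fun z : Z => LPMD ℙ X z κ l) := by
  refine ⟨∑ i, |κ i - l i| * ∫ ω, |X ω i| ∂ℙ, ?_⟩
  rintro x ⟨z, rfl⟩
  exact lpmd_le_bound ℙ X hXint κ l z

/-- `Phi Z l κ = ⨆ z : Z, D(z, κ, l)` -/
noncomputable def Phi (Z : Set ℝ) (l κ : Fin p → ℝ) : ℝ := ⨆ z : Z, LPMD ℙ X z κ l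

lemma phi_sub_le {Z : Set ℝ} (hZne : Z.Nonempty) (l κ κ' : Fin p → ℝ) :
    Phi ℙ X Z l κ - Phi ℙ X Z l κ' ≤ ∑ i, |κ i - κ' i| * ∫ ω, |X ω i| ∂ℙ := by
  haveI : Nonempty Z := hZne.to_subtype
  rw [sub_le_iff_le_add, add_comm]
  apply ciSup_le
  intro z
  exact (lpmd_diff_le ℙ X hXint κ κ' l z).trans
    (add_le_add (le_ciSup (bddAbove_lpmd ℙ X hXint Z κ' l) z) le_rfl)

lemma phi_abs_le {Z : Set ℝ} (hZne : Z.Nonempty) (l κ κ' : Fin p → ℝ) :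
    |Phi ℙ X Z l κ - Phi ℙ X Z l κ'| ≤ ∑ i, |κ i - κ' i| * ∫ ω, |X ω i| ∂ℙ := by
  rw [abs_sub_le_iff]
  refine ⟨phi_sub_le ℙ X hXint hZne l κ κ', ?_⟩
  simpa [abs_sub_comm] using phi_sub_le ℙ X hXint hZne l κ' κ

lemma phi_continuous {Z : Set ℝ} (hZne : Z.Nonempty) (l : Fin p → ℝ) :
    Continuous (Phi ℙ X Z l) := by
  set C : ℝ := ∑ i, ∫ ω, |X ω i| ∂ℙ with hC
  have hC0 : 0 ≤ C := Finset.sum_nonneg fun i _ => integral_nonneg fun ω => abs_nonneg _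
  apply LipschitzWith.continuous (K := C.toNNReal)
  apply LipschitzWith.of_dist_le_mul
  intro κ κ'
  rw [Real.dist_eq, Real.coe_toNNReal _ hC0]
  calc |Phi ℙ X Z l κ - Phi ℙ X Z l κ'| ≤ ∑ i, |κ i - κ' i| * ∫ ω, |X ω i| ∂ℙ :=
        phi_abs_le ℙ X hXint hZne l κ κ'
    _ ≤ ∑ i, dist κ κ' * ∫ ω, |X ω i| ∂ℙ := by
        apply Finset.sum_le_sum
        intro i _
        exact mul_le_mul_of_nonneg_right
          (by simpa [Real.dist_eq] using dist_le_pi_dist κ κ' i)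
          (integral_nonneg fun ω => abs_nonneg _)
    _ = C * dist κ κ' := by rw [← Finset.mul_sum, mul_comm]

lemma phi_ge {Z : Set ℝ} {z₀ : ℝ} (hz₀ : z₀ ∈ Z) (l κ : Fin p → ℝ) :
    -(∫ ω, max (z₀ - ∑ i, l i * X ω i) 0 ∂ℙ) ≤ Phi ℙ X Z l κ := by
  refine le_trans ?_ (le_ciSup (bddAbove_lpmd ℙ X hXint Z κ l) ⟨z₀, hz₀⟩)
  have := F_nonneg ℙ X κ z₀
  unfold LPMD
  linarith

lemma phi_le_C {Z : Set ℝ} {κ l : Fin p → ℝ}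
    (hκ : κ ∈ stdSimplex ℝ (Fin p)) (hl : l ∈ stdSimplex ℝ (Fin p)) :
    Phi ℙ X Z l κ ≤ ∑ i, ∫ ω, |X ω i| ∂ℙ := by
  have hC0 : 0 ≤ ∑ i, ∫ ω, |X ω i| ∂ℙ :=
    Finset.sum_nonneg fun i _ => integral_nonneg fun ω => abs_nonneg _
  apply Real.iSup_le _ hC0
  intro z
  refine (lpmd_le_bound ℙ X hXint κ l z).trans (Finset.sum_le_sum fun i _ => ?_)
  have h1 : |κ i - l i| ≤ 1 := by
    rw [abs_sub_le_iff]
    constructor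
    · linarith [entry_le_one hκ i, hl.1 i]
    · linarith [entry_le_one hl i, hκ.1 i]
  nlinarith [integral_nonneg (μ := ℙ) (f := fun ω => |X ω i|) fun ω => abs_nonneg (X ω i), h1,
    abs_nonneg (κ i - l i)]


end Aux


/-- The coordinate-restricted simplex `Λ_S`. -/
def LamS (p : ℕ) (S : Finset (Fin p)) : Set (Fin p → ℝ) :=
  stdSimplex ℝ (Fin p) ∩ {x | ∀ i ∉ S, x i = 0}

lemma lamS_closed (p : ℕ) (S : Finset (Fin p)) : IsClosed (LamS p S) := by
  apply (isClosed_stdSimplex ℝ (Fin p)).inter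
  have : {x : Fin p → ℝ | ∀ i ∉ S, x i = 0} = ⋂ i ∈ {i : Fin p | i ∉ S}, {x | x i = 0} := by
    ext x; simp [Set.mem_iInter]
  rw [this]
  exact isClosed_biInter fun i _ => isClosed_eq (continuous_apply i) continuous_const

lemma lamS_compact (p : ℕ) (S : Finset (Fin p)) : IsCompact (LamS p S) :=
  (isCompact_stdSimplex ℝ (Fin p)).of_isClosed_subset (lamS_closed p S) Set.inter_subset_left

lemma lamS_nonempty (p : ℕ) (S : Finset (Fin p)) (hS : S.Nonempty) : (LamS p S).Nonempty := by
  obtain ⟨i₀, hi₀⟩ := hS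
  refine ⟨fun i => if i = i₀ then 1 else 0, ⟨fun i => ?_, ?_⟩, fun i hi => ?_⟩
  · dsimp only; split <;> norm_num
  · simp
  · simp only [ite_eq_right_iff]
    intro hii₀
    exact absurd (hii₀ ▸ hi₀) hi

lemma lamS_csupp (p : ℕ) (S : Finset (Fin p)) : csupp (LamS p S) ≤ S.card := by
  have hsub : {i : Fin p | ∃ k ∈ LamS p S, k i ≠ 0} ⊆ ↑S := by
    intro i ⟨k, hk, hki⟩
    by_contra hiS
    exact hki (hk.2 i (by simpa using hiS))
  calc csupp (LamS p S) ≤ (↑S : Set (Fin p)).ncard :=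
        Set.ncard_le_ncard hsub (S : Set (Fin p)).toFinite
    _ = S.card := Set.ncard_coe_finset S

lemma lamS_mem_sparseSets (p q : ℕ) (hq : 0 < q) (S : Finset (Fin p)) (hcard : S.card = q) :
    LamS p S ∈ sparseSets p q :=
  ⟨Set.inter_subset_left, lamS_nonempty p S (Finset.card_pos.mp (hcard ▸ hq)),
    lamS_closed p S, hcard ▸ lamS_csupp p S⟩

lemma exists_lamS_superset {p q : ℕ} (hqp : q < p) {K : Set (Fin p → ℝ)}
    (hK : K ∈ sparseSets p q) : ∃ S : Finset (Fin p), S.card = q ∧ K ⊆ LamS p S := by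
  have hfin : {i : Fin p | ∃ k ∈ K, k i ≠ 0}.Finite := Set.toFinite _
  have hcard : hfin.toFinset.card ≤ q := by
    rw [← Set.ncard_eq_toFinset_card _ hfin]
    exact hK.2.2.2
  obtain ⟨S, hsub, hScard⟩ := Finset.exists_superset_card_eq hcard
    (by simpa using hqp.le)
  refine ⟨S, hScard, fun k hk => ⟨hK.1 hk, fun i hi => ?_⟩⟩
  by_contra hki
  exact hi (hsub (hfin.mem_toFinset.mpr ⟨k, hk, hki⟩))

/-- **Lemma 2, finite-dimensional part.** There exists a `q`-sparse
nonempty closed `K ⊆ Λ` SSD-spanning `Λ` iff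
`inf_{K ∈ L_{p,q}} sup_{λ ∈ Λ} inf_{κ ∈ K} sup_{z ∈ Z} D(z, κ, λ, ℙ) ≤ 0`. -/
theorem sparse_ssd_stmt5
    {Ω : Type*} [MeasurableSpace Ω] (ℙ : Measure Ω) [IsProbabilityMeasure ℙ]
    {p q : ℕ} (hq : 0 < q) (hqp : q < p)
    (X : Ω → Fin p → ℝ) (hXmeas : Measurable X)
    (hXint : ∀ i, Integrable (fun ω => X ω i) ℙ)
    (Z : Set ℝ)
    (hZ : Z = closure (convexHull ℝ (⋃ i, measSupport (Measure.map (fun ω => X ω i) ℙ))))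
    (hZne : Z.Nonempty) (hZbdd : BddBelow Z) :
    (∃ K ∈ sparseSets p q, ∀ l ∈ stdSimplex ℝ (Fin p), ∃ k ∈ K, ∀ z ∈ Z,
        LPMD ℙ X z k l ≤ 0) ↔
      (⨅ K : sparseSets p q, ⨆ l : stdSimplex ℝ (Fin p), ⨅ k : K.1, ⨆ z : Z,
        LPMD ℙ X (↑z) (↑k) (↑l)) ≤ 0 := by
  haveI hZsub : Nonempty Z := hZne.to_subtype
  have hp : 0 < p := hq.trans hqp
  obtain ⟨z₀, hz₀⟩ := hZne
  constructor
  · rintro ⟨K, hK, hspan⟩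
    haveI : Nonempty (sparseSets p q) := ⟨⟨K, hK⟩⟩
    refine real_iInf_le_zero _ ⟨K, hK⟩ ?_
    show (⨆ l : stdSimplex ℝ (Fin p), ⨅ k : K, ⨆ z : Z, LPMD ℙ X (↑z) (↑k) (↑l)) ≤ 0
    refine Real.iSup_le (fun l => ?_) le_rfl
    obtain ⟨k, hkK, hk⟩ := hspan l l.2
    haveI : Nonempty K := hK.2.1.to_subtype
    refine real_iInf_le_zero _ ⟨k, hkK⟩ ?_
    exact Real.iSup_le (fun z => hk z z.2) le_rfl
  · intro h
    set g : Set (Fin p → ℝ) → ℝ :=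
      fun K => ⨆ l : stdSimplex ℝ (Fin p), ⨅ k : K, Phi ℙ X Z (↑l) (↑k) with hg
    have hbb : ∀ (K : Set (Fin p → ℝ)) (l : Fin p → ℝ),
        BddBelow (Set.range fun k : K => Phi ℙ X Z l (↑k)) := by
      intro K l
      refine ⟨-(∫ ω, max (z₀ - ∑ i, l i * X ω i) 0 ∂ℙ), ?_⟩
      rintro x ⟨k, rfl⟩
      exact phi_ge ℙ X hXint hz₀ l k
    have hba : ∀ (K : Set (Fin p → ℝ)), K.Nonempty → K ⊆ stdSimplex ℝ (Fin p) →
        BddAbove (Set.range fun l : stdSimplex ℝ (Fin p) => ⨅ k : K, Phi ℙ X Z (↑l) (↑k)) := by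
      intro K hKne hKsub
      obtain ⟨κ₀, hκ₀⟩ := hKne
      refine ⟨∑ i, ∫ ω, |X ω i| ∂ℙ, ?_⟩
      rintro x ⟨l, rfl⟩
      exact (ciInf_le (hbb K l) ⟨κ₀, hκ₀⟩).trans (phi_le_C ℙ X hXint (hKsub hκ₀) l.2)
    have hmono : ∀ (K : Set (Fin p → ℝ)), K.Nonempty → K ⊆ stdSimplex ℝ (Fin p) →
        ∀ S : Finset (Fin p), K ⊆ LamS p S → g (LamS p S) ≤ g K := by
      intro K hKne hKsub S hsub
      haveI : Nonempty K := hKne.to_subtype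
      apply ciSup_mono (hba K hKne hKsub)
      intro l
      exact le_ciInf fun k => ciInf_le (hbb (LamS p S) l) ⟨k.1, hsub k.2⟩
    set 𝒮 : Finset (Finset (Fin p)) := Finset.univ.filter (fun S => S.card = q) with h𝒮def
    have h𝒮ne : 𝒮.Nonempty := by
      obtain ⟨S, -, hScard⟩ := Finset.exists_superset_card_eq (s := (∅ : Finset (Fin p)))
        (by simp) (by simpa using hqp.le)
      exact ⟨S, by simp [h𝒮def, hScard]⟩
    set m := 𝒮.inf' h𝒮ne (fun S => g (LamS p S)) with hm
    haveI : Nonempty (sparseSets p q) := by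
      obtain ⟨S, hS⟩ := h𝒮ne
      exact ⟨⟨LamS p S, lamS_mem_sparseSets p q hq S (by simpa [h𝒮def] using hS)⟩⟩
    have hmle : m ≤ ⨅ K : sparseSets p q, g K.1 := by
      apply le_ciInf
      rintro ⟨K, hK⟩
      obtain ⟨S, hScard, hsub⟩ := exists_lamS_superset hqp hK
      exact (Finset.inf'_le _ (by simp [h𝒮def, hScard])).trans
        (hmono K hK.2.1 hK.1 S hsub)
    have hm0 : m ≤ 0 := hmle.trans h
    obtain ⟨S₀, hS₀, hmeq⟩ := Finset.exists_mem_eq_inf' h𝒮ne (fun S => g (LamS p S))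
    have hS₀card : S₀.card = q := by simpa [h𝒮def] using hS₀
    have hg0 : g (LamS p S₀) ≤ 0 := by rw [← hmeq]; exact hm0
    refine ⟨LamS p S₀, lamS_mem_sparseSets p q hq S₀ hS₀card, ?_⟩
    intro l hl
    have hcont := phi_continuous ℙ X hXint ⟨z₀, hz₀⟩ l
    obtain ⟨ks, hks, hmin⟩ := (lamS_compact p S₀).exists_isMinOn
      (lamS_nonempty p S₀ (Finset.card_pos.mp (hS₀card ▸ hq))) hcont.continuousOn
    have h5 : (⨅ k : LamS p S₀, Phi ℙ X Z l (↑k)) ≤ g (LamS p S₀) :=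
      le_ciSup (hba (LamS p S₀) ⟨ks, hks⟩ Set.inter_subset_left) ⟨l, hl⟩
    haveI : Nonempty (LamS p S₀) := ⟨⟨ks, hks⟩⟩
    have h6 : Phi ℙ X Z l ks ≤ ⨅ k : LamS p S₀, Phi ℙ X Z l (↑k) :=
      le_ciInf fun k => hmin k.2
    refine ⟨ks, hks, fun z hz => ?_⟩
    have h7 : LPMD ℙ X z ks l ≤ Phi ℙ X Z l ks :=
      le_ciSup (bddAbove_lpmd ℙ X hXint Z ks l) ⟨z, hz⟩
    linarith
end

section
/- Let X : Ω → ℝᵖ be a random vector with E‖X‖ < ∞, z ∈ ℝ, and κ₀ ∈ ℝᵖ with ℙ(κ₀ᵀX = z) = 0. Then the convex function f(κ) := E[(z − κᵀX)₊] is differentiable at κ₀ with gradient ∇f(κ₀) = −E[X · 1{κ₀ᵀX ≤ z}], where (x)₊ := max(x, 0). -/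
open MeasureTheory
open scoped RealInnerProductSpace

/-- If `E‖X‖ < ∞` and the portfolio return `κ₀ᵀX` puts no mass at the
threshold `z`, then the convex function `κ ↦ E[(z − κᵀX)₊]` is differentiable at `κ₀`
with gradient `−E[X · 1{κ₀ᵀX ≤ z}]`. -/
theorem sparse_ssd_stmt12
    {Ω : Type*} [MeasurableSpace Ω] (ℙ : Measure Ω) [IsProbabilityMeasure ℙ]
    {p : ℕ} (X : Ω → EuclideanSpace ℝ (Fin p)) (hXmeas : Measurable X)
    (hXint : Integrable (fun ω => ‖X ω‖) ℙ)
    (z : ℝ) (k₀ : EuclideanSpace ℝ (Fin p))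
    (hz : ℙ {ω | ⟪k₀, X ω⟫ = z} = 0) :
    HasGradientAt (fun k : EuclideanSpace ℝ (Fin p) => ∫ ω, max (z - ⟪k, X ω⟫) 0 ∂ℙ)
      (-(∫ ω in {ω | ⟪k₀, X ω⟫ ≤ z}, X ω ∂ℙ)) k₀ := by
  -- the candidate derivative of the integrand
  set F' : Ω → EuclideanSpace ℝ (Fin p) →L[ℝ] ℝ := fun ω =>
    if ⟪k₀, X ω⟫ ≤ z then -(innerSL ℝ (X ω)) else 0 with hF'def
  have hXi : Integrable X ℙ :=
    hXint.mono' hXmeas.aestronglyMeasurable (Filter.Eventually.of_forall fun ω => le_refl _)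
  have hinner_meas : ∀ k : EuclideanSpace ℝ (Fin p), Measurable fun ω => ⟪k, X ω⟫ := fun k =>
    ((innerSL ℝ k).continuous.measurable).comp hXmeas
  have hs_meas : MeasurableSet {ω | ⟪k₀, X ω⟫ ≤ z} :=
    measurableSet_le (hinner_meas k₀) measurable_const
  -- measurability of integrand for each k
  have hF_meas : ∀ᶠ k in nhds k₀,
      AEStronglyMeasurable (fun ω => max (z - ⟪k, X ω⟫) 0) ℙ := by
    refine Filter.Eventually.of_forall fun k => ?_
    exact ((measurable_const.sub (hinner_meas k)).max measurable_const).aestronglyMeasurable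
  -- integrability at k₀
  have hF_int : Integrable (fun ω => max (z - ⟪k₀, X ω⟫) 0) ℙ := by
    refine (((integrable_const |z|).add (hXint.const_mul ‖k₀‖)).mono'
      (((measurable_const.sub (hinner_meas k₀)).max measurable_const).aestronglyMeasurable)
      (Filter.Eventually.of_forall fun ω => ?_))
    have h1 : |max (z - ⟪k₀, X ω⟫) 0| ≤ |z - ⟪k₀, X ω⟫| := by
      rw [abs_le]
      constructor
      · exact le_trans (neg_abs_le _) (le_max_left _ _)
      · exact max_le (le_abs_self _) (abs_nonneg _)
    have h2 : |z - ⟪k₀, X ω⟫| ≤ |z| + |⟪k₀, X ω⟫| := abs_sub _ _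
    have h3 : |⟪k₀, X ω⟫| ≤ ‖k₀‖ * ‖X ω‖ := abs_real_inner_le_norm _ _
    calc ‖max (z - ⟪k₀, X ω⟫) 0‖ = |max (z - ⟪k₀, X ω⟫) 0| := rfl
      _ ≤ |z| + |⟪k₀, X ω⟫| := le_trans h1 h2
      _ ≤ |z| + ‖k₀‖ * ‖X ω‖ := by linarith
  -- measurability of F'
  have hF'_meas : AEStronglyMeasurable F' ℙ := by
    have h1 : AEStronglyMeasurable (fun ω => -(innerSL ℝ (X ω))) ℙ :=
      ((innerSL ℝ).continuous.comp_aestronglyMeasurable hXmeas.aestronglyMeasurable).neg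
    have heq : F' = fun ω => Set.indicator {ω | ⟪k₀, X ω⟫ ≤ z}
        (fun ω => -(innerSL ℝ (X ω))) ω := by
      funext ω
      rw [hF'def]
      dsimp only
      by_cases h : ⟪k₀, X ω⟫ ≤ z
      · rw [if_pos h, Set.indicator_of_mem (show ω ∈ {ω | ⟪k₀, X ω⟫ ≤ z} from h)]
      · rw [if_neg h, Set.indicator_of_notMem (show ω ∉ {ω | ⟪k₀, X ω⟫ ≤ z} from h)]
    rw [heq]
    exact h1.indicator hs_meas
  -- the Lipschitz estimate
  have h_lip : ∀ᵐ ω ∂ℙ, LipschitzOnWith (Real.nnabs ‖X ω‖)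
      (fun k => max (z - ⟪k, X ω⟫) 0) (Metric.ball k₀ 1) := by
    refine Filter.Eventually.of_forall fun ω => ?_
    rw [lipschitzOnWith_iff_dist_le_mul]
    intro k _ k' _
    have hcoe : ((Real.nnabs ‖X ω‖ : NNReal) : ℝ) = ‖X ω‖ := by
      rw [Real.coe_nnabs, abs_of_nonneg (norm_nonneg _)]
    rw [hcoe, Real.dist_eq, dist_eq_norm]
    have h4 : |⟪k' - k, X ω⟫| ≤ ‖k' - k‖ * ‖X ω‖ := abs_real_inner_le_norm _ _
    calc |max (z - ⟪k, X ω⟫) 0 - max (z - ⟪k', X ω⟫) 0|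
        ≤ |(z - ⟪k, X ω⟫) - (z - ⟪k', X ω⟫)| := abs_max_sub_max_le_abs _ _ _
      _ = |⟪k' - k, X ω⟫| := by rw [inner_sub_left]; ring_nf
      _ ≤ ‖k' - k‖ * ‖X ω‖ := h4
      _ = ‖X ω‖ * ‖k - k'‖ := by rw [norm_sub_rev]; ring
  -- a.e. differentiability at k₀
  have h_diff : ∀ᵐ ω ∂ℙ, HasFDerivAt (fun k => max (z - ⟪k, X ω⟫) 0) (F' ω) k₀ := by
    have hne : ∀ᵐ ω ∂ℙ, ⟪k₀, X ω⟫ ≠ z := by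
      rw [ae_iff]
      simpa using hz
    filter_upwards [hne] with ω hω
    rcases lt_or_gt_of_ne hω with h | h
    · -- ⟪k₀, X ω⟫ < z : locally f k = z - ⟪k, X ω⟫
      have hF' : F' ω = -(innerSL ℝ (X ω)) := if_pos h.le
      rw [hF']
      have hlin : HasFDerivAt (fun k : EuclideanSpace ℝ (Fin p) => z - ⟪k, X ω⟫)
          (-(innerSL ℝ (X ω))) k₀ := by
        have h1 : HasFDerivAt (fun k : EuclideanSpace ℝ (Fin p) => (innerSL ℝ (X ω)) k)
            (innerSL ℝ (X ω)) k₀ := (innerSL ℝ (X ω)).hasFDerivAt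
        have h2 := (hasFDerivAt_const z k₀).sub h1
        simp only [zero_sub] at h2
        refine h2.congr_of_eventuallyEq ?_
        refine Filter.Eventually.of_forall fun k => ?_
        simp only [innerSL_apply_apply]
        rw [real_inner_comm]; rfl
      refine hlin.congr_of_eventuallyEq ?_
      have hopen : IsOpen {k : EuclideanSpace ℝ (Fin p) | ⟪k, X ω⟫ < z} :=
        isOpen_lt (Continuous.inner continuous_id continuous_const) continuous_const
      filter_upwards [hopen.mem_nhds
        (show k₀ ∈ {k : EuclideanSpace ℝ (Fin p) | ⟪k, X ω⟫ < z} from h)] with k hk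
      exact max_eq_left (sub_nonneg.mpr hk.le)
    · -- ⟪k₀, X ω⟫ > z : locally f k = 0
      have hF' : F' ω = 0 := if_neg (not_le.mpr h)
      rw [hF']
      refine (hasFDerivAt_const (0 : ℝ) k₀).congr_of_eventuallyEq ?_
      have hopen : IsOpen {k : EuclideanSpace ℝ (Fin p) | z < ⟪k, X ω⟫} :=
        isOpen_lt continuous_const (Continuous.inner continuous_id continuous_const)
      filter_upwards [hopen.mem_nhds
        (show k₀ ∈ {k : EuclideanSpace ℝ (Fin p) | z < ⟪k, X ω⟫} from h)] with k hk
      exact max_eq_right (sub_nonpos.mpr hk.le)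
  obtain ⟨hF'_int, hderiv⟩ :=
    hasFDerivAt_integral_of_dominated_loc_of_lip (μ := ℙ) (F' := F') (Metric.ball_mem_nhds k₀ one_pos)
      hF_meas hF_int hF'_meas h_lip hXint h_diff
  rw [hasGradientAt_iff_hasFDerivAt]
  have heq : (∫ ω, F' ω ∂ℙ) =
      (InnerProductSpace.toDual ℝ (EuclideanSpace ℝ (Fin p)))
        (-(∫ ω in {ω | ⟪k₀, X ω⟫ ≤ z}, X ω ∂ℙ)) := by
    ext κ
    rw [ContinuousLinearMap.integral_apply hF'_int]
    have hκ : ∀ ω, F' ω κ =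
        -(Set.indicator {ω | ⟪k₀, X ω⟫ ≤ z} (fun ω => ⟪κ, X ω⟫) ω) := by
      intro ω
      by_cases h : ⟪k₀, X ω⟫ ≤ z
      · rw [hF'def]
        dsimp only
        rw [if_pos h, Set.indicator_of_mem (show ω ∈ {ω | ⟪k₀, X ω⟫ ≤ z} from h)]
        simp only [ContinuousLinearMap.neg_apply, innerSL_apply_apply]
        rw [real_inner_comm]
      · rw [hF'def]
        dsimp only
        rw [if_neg h, Set.indicator_of_notMem (show ω ∉ {ω | ⟪k₀, X ω⟫ ≤ z} from h)]
        simp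
    simp only [hκ]
    rw [integral_neg, integral_indicator hs_meas]
    have hinn : (∫ ω in {ω | ⟪k₀, X ω⟫ ≤ z}, ⟪κ, X ω⟫ ∂ℙ)
        = ⟪κ, ∫ ω in {ω | ⟪k₀, X ω⟫ ≤ z}, X ω ∂ℙ⟫ := integral_inner hXi.restrict κ
    rw [hinn, InnerProductSpace.toDual_apply_apply, inner_neg_left, real_inner_comm]
  rw [heq] at hderiv
  exact hderiv
end
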